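/- arXiv:2602.04663 — 7 statements merged into one kernel-verified Lean document; each statement's English description precedes it below -/
import Mathlib

section
/- Fix η > 0, b ∈ ℝ, and set A(x) = (η/β)(R(x) − b). Let ν be a probability measure with density q with respect to π_ref satisfying 0 < ε ≤ q ≤ C π_ref-a.e. Then for every probability measure π on X, F(π) = ∫ A dπ − KL(π‖ν) − η·KL(π‖π_ref) satisfies F(π) ≤ F(T(ν)), with equality if and only if π = T(ν); i.e., the proximal objective is uniquely maximized at the geometric mixture T(ν) with density dT(ν)/dπ_ref ∝ exp(ηR/((1+η)β))·q^{1/(1+η)}, and this maximizer is independent of the baseline b. -/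
open MeasureTheory

/-- Kullback–Leibler divergence `∫ log(dμ/dν) dμ`, equal to `+∞` if `μ` is not
absolutely continuous with respect to `ν` (or if the log-likelihood ratio is not integrable). -/
noncomputable def klDiv {X : Type*} [MeasurableSpace X] (μ ν : Measure X) : EReal :=
  open scoped Classical in
  if μ ≪ ν ∧ Integrable (llr μ ν) μ then ((∫ x, llr μ ν x ∂μ : ℝ) : EReal) else ⊤

open scoped ENNReal

lemma klDiv_of_ac {X : Type*} [MeasurableSpace X] {μ ν : Measure X}
    (h1 : μ ≪ ν) (h2 : Integrable (llr μ ν) μ) :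
    klDiv μ ν = ((∫ x, llr μ ν x ∂μ : ℝ) : EReal) := if_pos ⟨h1, h2⟩

lemma klDiv_of_not {X : Type*} [MeasurableSpace X] {μ ν : Measure X}
    (h : ¬(μ ≪ ν ∧ Integrable (llr μ ν) μ)) : klDiv μ ν = ⊤ := if_neg h



lemma gibbs_aux {X : Type*} [MeasurableSpace X] (μ ξ : Measure X)
    [IsProbabilityMeasure μ] [IsProbabilityMeasure ξ]
    (hμξ : μ ≪ ξ) (hint : Integrable (llr μ ξ) μ) :
    0 ≤ ∫ x, llr μ ξ x ∂μ ∧ (∫ x, llr μ ξ x ∂μ = 0 → μ = ξ) := by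
  set g : X → ℝ := fun x => (ξ.rnDeriv μ x).toReal with hg_def
  have hg_int : Integrable g μ := Measure.integrable_toReal_rnDeriv
  have hgpos : ∀ᵐ x ∂μ, 0 < ξ.rnDeriv μ x := Measure.rnDeriv_pos' hμξ
  have hglt : ∀ᵐ x ∂μ, ξ.rnDeriv μ x < ⊤ := Measure.rnDeriv_lt_top ξ μ
  have hneg : (fun x => - llr μ ξ x) =ᵐ[μ] fun x => Real.log (g x) := by
    filter_upwards [neg_llr hμξ] with x hx
    simpa [llr] using hx
  have hlog_int : Integrable (fun x => Real.log (g x)) μ := hint.neg.congr hneg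
  have hg_le_one : ∫ x, g x ∂μ ≤ 1 := by
    have h := Measure.setIntegral_toReal_rnDeriv_le (μ := ξ) (ν := μ) (s := Set.univ)
      (measure_ne_top ξ _)
    simpa [measure_univ] using h
  have hlog_eq : ∫ x, Real.log (g x) ∂μ = - ∫ x, llr μ ξ x ∂μ := by
    rw [← integral_neg]; exact (integral_congr_ae hneg).symm
  have hptw : ∀ᵐ x ∂μ, Real.log (g x) ≤ g x - 1 := by
    filter_upwards [hgpos, hglt] with x h1 h2
    exact Real.log_le_sub_one_of_pos (ENNReal.toReal_pos h1.ne' h2.ne)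
  constructor
  · have h1 : ∫ x, Real.log (g x) ∂μ ≤ ∫ x, (g x - 1) ∂μ :=
      integral_mono_ae hlog_int (hg_int.sub (integrable_const 1)) hptw
    have h2 : ∫ x, (g x - 1) ∂μ = ∫ x, g x ∂μ - 1 := by
      rw [integral_sub hg_int (integrable_const 1)]; simp
    rw [hlog_eq] at h1
    linarith
  · intro h0
    have hh_int : Integrable (fun x => g x - 1 - Real.log (g x)) μ := by
      exact (hg_int.sub (integrable_const 1)).sub hlog_int
    have hh_nonneg : 0 ≤ᵐ[μ] (fun x => g x - 1 - Real.log (g x)) := by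
      filter_upwards [hptw] with x hx
      simp only [Pi.zero_apply]; linarith
    have e1 : ∫ x, (g x - 1) ∂μ = ∫ x, g x ∂μ - 1 := by
      rw [integral_sub hg_int (integrable_const 1)]; simp
    have hh_val : ∫ x, (g x - 1 - Real.log (g x)) ∂μ = ∫ x, g x ∂μ - 1 := by
      have e2 : ∫ x, (g x - 1 - Real.log (g x)) ∂μ
          = ∫ x, (g x - 1) ∂μ - ∫ x, Real.log (g x) ∂μ := by
        exact integral_sub (hg_int.sub (integrable_const 1)) hlog_int
      rw [e2, e1, hlog_eq, h0]; simp
    have hh_zero : ∫ x, (g x - 1 - Real.log (g x)) ∂μ = 0 :=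
      le_antisymm (hh_val ▸ by linarith) (integral_nonneg_of_ae hh_nonneg)
    have hh_ae : (fun x => g x - 1 - Real.log (g x)) =ᵐ[μ] 0 :=
      (integral_eq_zero_iff_of_nonneg_ae hh_nonneg hh_int).mp hh_zero
    have hgae : ∀ᵐ x ∂μ, ξ.rnDeriv μ x = 1 := by
      filter_upwards [hh_ae, hgpos, hglt] with x hx h1 h2
      have hgx : 0 < g x := ENNReal.toReal_pos h1.ne' h2.ne
      have hg1 : g x = 1 := by
        by_contra hne
        have := Real.log_lt_sub_one_of_pos hgx hne
        simp only [Pi.zero_apply] at hx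
        linarith
      have : (ξ.rnDeriv μ x).toReal = (1 : ℝ≥0∞).toReal := by simpa using hg1
      exact (ENNReal.toReal_eq_toReal_iff' h2.ne (by simp)).mp this
    -- transfer to a.e. ξ
    have hinv : ∀ᵐ x ∂μ, μ.rnDeriv ξ x = 1 := by
      filter_upwards [Measure.inv_rnDeriv hμξ, hgae] with x hx hx1
      have : (μ.rnDeriv ξ x)⁻¹ = 1 := by rw [← hx1]; exact hx
      simpa [ENNReal.inv_eq_one] using this
    set f := μ.rnDeriv ξ with hf_def
    have hfmeas : Measurable f := Measure.measurable_rnDeriv μ ξ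
    set s : Set X := {x | f x ≠ 1} with hs_def
    have hs : MeasurableSet s := (hfmeas (measurableSet_singleton 1)).compl
    have hμs : μ s = 0 := ae_iff.mp hinv
    have hwd : ξ.withDensity f = μ := Measure.withDensity_rnDeriv_eq μ ξ hμξ
    have hsint : ∫⁻ x in s, f x ∂ξ = 0 := by
      rw [← withDensity_apply f hs, hwd, hμs]
    have hsc : ∫⁻ x in sᶜ, f x ∂ξ = ξ sᶜ := by
      rw [setLIntegral_congr_fun hs.compl (fun x hx => by
        simpa [s] using not_not.mp hx)]
      simp
    have htot : ξ sᶜ = 1 := by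
      have h1 : ∫⁻ x, f x ∂ξ = 1 := by
        rw [Measure.lintegral_rnDeriv hμξ]
        simp
      rw [← lintegral_add_compl f hs, hsint, zero_add, hsc] at h1
      exact h1
    have hξs : ξ s = 0 := by
      have := measure_add_measure_compl (μ := ξ) hs
      rw [htot, measure_univ] at this
      exact (ENNReal.add_right_inj ENNReal.one_ne_top).mp
        (by rw [add_comm] at this; simpa using this)
    have hfae : f =ᵐ[ξ] 1 := by
      rw [Filter.EventuallyEq, ae_iff]
      simpa [s] using hξs
    exact (Measure.rnDeriv_eq_one_iff_eq hμξ).mp hfae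

/-- With `A(x) = (η/β)(R(x) − b)` and `ν` a probability measure with density `q`
(with `0 < ε ≤ q ≤ C` a.e.) w.r.t. `π_ref`, the proximal objective
`F(π) = ∫ A dπ − KL(π‖ν) − η·KL(π‖π_ref)` is uniquely maximized at the geometric
mixture `T(ν)` with density `exp(ηR/((1+η)β))·q^{1/(1+η)} / N(ν)` w.r.t. `π_ref`,
independently of the baseline `b`. -/
theorem proximal_objective_unique_maximizer
    {X : Type*} [MeasurableSpace X]
    (π_ref : Measure X) [IsProbabilityMeasure π_ref]
    (R : X → ℝ) (hRmeas : Measurable R) (M : ℝ) (hRbd : ∀ x, |R x| ≤ M)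
    (β : ℝ) (hβ : 0 < β) (η : ℝ) (hη : 0 < η) (b : ℝ)
    (ε C : ℝ) (hε : 0 < ε)
    (q : X → ℝ) (hqmeas : Measurable q)
    (hqbd : ∀ᵐ x ∂π_ref, ε ≤ q x ∧ q x ≤ C)
    (ν : Measure X) [IsProbabilityMeasure ν]
    (hν : ν = π_ref.withDensity (fun x => ENNReal.ofReal (q x)))
    (N : ℝ)
    (hN : N = ∫ x, Real.exp (η * R x / ((1 + η) * β)) * q x ^ ((1 : ℝ) / (1 + η)) ∂π_ref)
    (Tν : Measure X)
    (hTν : Tν = π_ref.withDensity (fun x =>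
      ENNReal.ofReal (Real.exp (η * R x / ((1 + η) * β)) * q x ^ ((1 : ℝ) / (1 + η)) / N)))
    (F : Measure X → EReal)
    (hF : ∀ π : Measure X,
      F π = ((∫ x, (η / β) * (R x - b) ∂π : ℝ) : EReal)
        - klDiv π ν - (η : EReal) * klDiv π π_ref)
    (π : Measure X) [IsProbabilityMeasure π] :
    F π ≤ F Tν ∧ (F π = F Tν ↔ π = Tν) := by
  have hη1 : (0:ℝ) < 1 + η := by linarith
  have hβη : (0:ℝ) < (1+η)*β := by positivity
  set f₀ : X → ℝ := fun x => Real.log (q x) with hf₀_def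
  set g : X → ℝ := fun x => (η/((1+η)*β)) * R x + (1/(1+η)) * Real.log (q x) with hg_def
  set p : X → ℝ := fun x => Real.exp (η * R x / ((1 + η) * β)) * q x ^ ((1 : ℝ) / (1 + η))
    with hp_def
  set Bf : ℝ := max |Real.log ε| |Real.log C| with hBf_def
  set Bg : ℝ := (η/((1+η)*β)) * M + (1/(1+η)) * Bf with hBg_def
  have hf₀m : Measurable f₀ := Real.measurable_log.comp hqmeas
  have hgm : Measurable g := (measurable_const.mul hRmeas).add (measurable_const.mul hf₀m)
  have haeq : ∀ᵐ x ∂π_ref, 0 < q x ∧ |f₀ x| ≤ Bf ∧ |g x| ≤ Bg ∧ Real.exp (g x) = p x := by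
    filter_upwards [hqbd] with x ⟨h1, h2⟩
    have hq0 : 0 < q x := lt_of_lt_of_le hε h1
    have hlog1 : Real.log ε ≤ Real.log (q x) := Real.log_le_log hε h1
    have hlog2 : Real.log (q x) ≤ Real.log C := Real.log_le_log hq0 h2
    have hBf : |f₀ x| ≤ Bf := abs_le_max_abs_abs hlog1 hlog2
    refine ⟨hq0, hBf, ?_, ?_⟩
    · have e1 : |(η/((1+η)*β)) * R x| ≤ (η/((1+η)*β)) * M := by
        rw [abs_mul, abs_of_pos (by positivity : (0:ℝ) < η/((1+η)*β))]
        exact mul_le_mul_of_nonneg_left (hRbd x) (by positivity)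
      have e2 : |(1/(1+η)) * Real.log (q x)| ≤ (1/(1+η)) * Bf := by
        rw [abs_mul, abs_of_pos (by positivity : (0:ℝ) < 1/(1+η))]
        exact mul_le_mul_of_nonneg_left hBf (by positivity)
      calc |g x| ≤ |(η/((1+η)*β)) * R x| + |(1/(1+η)) * Real.log (q x)| := abs_add_le _ _
        _ ≤ (η/((1+η)*β)) * M + (1/(1+η)) * Bf := by linarith
    · rw [hg_def]
      simp only
      rw [Real.exp_add, hp_def]
      congr 1
      · congr 1; ring
      · rw [Real.rpow_def_of_pos hq0]
        congr 1; ring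
  have hexp_f₀ : Integrable (fun x => Real.exp (f₀ x)) π_ref := by
    refine Integrable.mono' (integrable_const (Real.exp Bf))
      (Real.measurable_exp.comp hf₀m).aestronglyMeasurable ?_
    filter_upwards [haeq] with x ⟨_, h2, _, _⟩
    rw [Real.norm_eq_abs, abs_of_pos (Real.exp_pos _)]
    exact Real.exp_le_exp.mpr (le_of_abs_le h2)
  have hexp_g : Integrable (fun x => Real.exp (g x)) π_ref := by
    refine Integrable.mono' (integrable_const (Real.exp Bg))
      (Real.measurable_exp.comp hgm).aestronglyMeasurable ?_
    filter_upwards [haeq] with x ⟨_, _, h3, _⟩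
    rw [Real.norm_eq_abs, abs_of_pos (Real.exp_pos _)]
    exact Real.exp_le_exp.mpr (le_of_abs_le h3)
  have hq_int : Integrable q π_ref := by
    refine Integrable.mono' (integrable_const C) hqmeas.aestronglyMeasurable ?_
    filter_upwards [hqbd] with x ⟨h1, h2⟩
    rw [Real.norm_eq_abs, abs_of_pos (lt_of_lt_of_le hε h1)]
    exact h2
  have hq_one : ∫ x, q x ∂π_ref = 1 := by
    have h1 : ν Set.univ = 1 := measure_univ
    rw [hν, withDensity_apply _ MeasurableSet.univ, Measure.restrict_univ,
      ← ofReal_integral_eq_lintegral_ofReal hq_int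
        (by filter_upwards [hqbd] with x ⟨h1, _⟩; simpa using le_trans hε.le h1)] at h1
    exact (ENNReal.ofReal_eq_one).mp h1
  have hZf : ∫ x, Real.exp (f₀ x) ∂π_ref = 1 := by
    rw [← hq_one]
    refine integral_congr_ae ?_
    filter_upwards [haeq] with x ⟨h1, _, _, _⟩
    exact Real.exp_log h1
  have hν_t : ν = π_ref.tilted f₀ := by
    rw [hν, Measure.tilted, hZf]
    refine withDensity_congr_ae ?_
    filter_upwards [haeq] with x ⟨h1, _, _, _⟩
    rw [div_one, Real.exp_log h1]
  have hN' : N = ∫ x, Real.exp (g x) ∂π_ref := by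
    rw [hN]
    refine (integral_congr_ae ?_).symm
    filter_upwards [haeq] with x ⟨_, _, _, h4⟩
    exact h4
  haveI : NeZero π_ref := ⟨fun h => by simpa [h] using (measure_univ (μ := π_ref))⟩
  have hNpos : 0 < N := hN' ▸ integral_exp_pos hexp_g
  have hT_t : Tν = π_ref.tilted g := by
    rw [hTν, Measure.tilted, ← hN']
    refine withDensity_congr_ae ?_
    filter_upwards [haeq] with x ⟨_, _, _, h4⟩
    rw [h4]
  haveI hTprob : IsProbabilityMeasure Tν := hT_t ▸ isProbabilityMeasure_tilted hexp_g
  have hT_ac : Tν ≪ π_ref := hT_t ▸ tilted_absolutelyContinuous π_ref g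
  have hac_T : π_ref ≪ Tν := hT_t ▸ absolutelyContinuous_tilted hexp_g
  have hν_ac : ν ≪ π_ref := hν ▸ withDensity_absolutelyContinuous π_ref _
  have hac_ν : π_ref ≪ ν := hν_t ▸ absolutelyContinuous_tilted hexp_f₀
  have hllrT : (fun x => llr Tν π_ref x) =ᵐ[π_ref] fun x => g x - Real.log N := by
    rw [hT_t, hN']
    exact log_rnDeriv_tilted_left_self hexp_g
  have hint_T : Integrable (llr Tν π_ref) Tν := by
    refine Integrable.mono' (integrable_const (Bg + |Real.log N|))
      (measurable_llr _ _).aestronglyMeasurable ?_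
    filter_upwards [hT_ac.ae_le hllrT, hT_ac.ae_le haeq] with x hx ⟨_, _, h3, _⟩
    rw [Real.norm_eq_abs, hx]
    calc |g x - Real.log N| ≤ |g x| + |Real.log N| := abs_sub _ _
      _ ≤ Bg + |Real.log N| := by linarith
  -- the key computation
  set c : ℝ := (1+η) * Real.log N - η*b/β with hc_def
  have key : ∀ (π' : Measure X), IsProbabilityMeasure π' → π' ≪ π_ref →
      Integrable (llr π' π_ref) π' →
      π' ≪ Tν ∧ Integrable (llr π' Tν) π' ∧
      F π' = ((c - (1+η) * ∫ x, llr π' Tν x ∂π' : ℝ) : EReal) := by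
    intro π' hprob hac hll
    haveI := hprob
    have hRint : Integrable R π' := by
      refine Integrable.mono' (integrable_const M) hRmeas.aestronglyMeasurable ?_
      exact ae_of_all _ fun x => by rw [Real.norm_eq_abs]; exact hRbd x
    have hf₀int : Integrable f₀ π' := by
      refine Integrable.mono' (integrable_const Bf) hf₀m.aestronglyMeasurable ?_
      filter_upwards [hac.ae_le haeq] with x ⟨_, h2, _, _⟩
      rw [Real.norm_eq_abs]; exact h2
    have hgint : Integrable g π' := (hRint.const_mul _).add (hf₀int.const_mul _)
    have hacν : π' ≪ ν := hac.trans hac_ν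
    have hintν : Integrable (llr π' ν) π' := by
      rw [hν_t]; exact integrable_llr_tilted_right hac hf₀int hll hexp_f₀
    have hvalν : ∫ x, llr π' ν x ∂π' = ∫ x, llr π' π_ref x ∂π' - ∫ x, f₀ x ∂π' := by
      rw [hν_t, integral_llr_tilted_right hac hf₀int hexp_f₀ hll, hZf, Real.log_one, add_zero]
    have hacT : π' ≪ Tν := hac.trans hac_T
    have hintT : Integrable (llr π' Tν) π' := by
      rw [hT_t]; exact integrable_llr_tilted_right hac hgint hll hexp_g
    have hvalT : ∫ x, llr π' Tν x ∂π'
        = ∫ x, llr π' π_ref x ∂π' - ∫ x, g x ∂π' + Real.log N := by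
      rw [hT_t, integral_llr_tilted_right hac hgint hexp_g hll, ← hN']
    have hA' : ∫ x, (η/β)*(R x - b) ∂π' = (η/β) * (∫ x, R x ∂π' - b) := by
      rw [integral_const_mul, integral_sub hRint (integrable_const b), integral_const]
      simp
    have hg_val : ∫ x, g x ∂π' = (η/((1+η)*β)) * ∫ x, R x ∂π'
        + (1/(1+η)) * ∫ x, f₀ x ∂π' := by
      rw [hg_def]
      simp only
      rw [integral_add (hRint.const_mul _) (hf₀int.const_mul _), integral_const_mul,
        integral_const_mul]
    refine ⟨hacT, hintT, ?_⟩
    rw [hF, klDiv_of_ac hac hll, klDiv_of_ac hacν hintν]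
    rw [show (η : EReal) * ((∫ x, llr π' π_ref x ∂π' : ℝ) : EReal)
        = ((η * ∫ x, llr π' π_ref x ∂π' : ℝ) : EReal) from (EReal.coe_mul _ _).symm,
      ← EReal.coe_sub, ← EReal.coe_sub, EReal.coe_eq_coe_iff]
    rw [hvalν, hvalT, hA', hg_val, hc_def]
    field_simp
    ring
  obtain ⟨_, _, hFT⟩ := key Tν hTprob hT_ac hint_T
  have hKT : ∫ x, llr Tν Tν x ∂Tν = 0 := by
    have h0 : llr Tν Tν =ᵐ[Tν] fun _ => 0 := by
      filter_upwards [Measure.rnDeriv_self Tν] with x hx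
      simp [llr, hx]
    rw [integral_congr_ae h0, integral_zero]
  have hFT' : F Tν = ((c : ℝ) : EReal) := by
    rw [hFT, hKT]; norm_num
  by_cases hGood : π ≪ π_ref ∧ Integrable (llr π π_ref) π
  · obtain ⟨hacT, hintT, hFπ⟩ := key π inferInstance hGood.1 hGood.2
    obtain ⟨hK0, hKeq⟩ := gibbs_aux π Tν hacT hintT
    constructor
    · rw [hFπ, hFT']
      exact EReal.coe_le_coe_iff.mpr (by nlinarith)
    · constructor
      · intro he
        rw [hFπ, hFT'] at he
        have h2 := EReal.coe_eq_coe_iff.mp he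
        exact hKeq (by nlinarith)
      · intro he
        rw [he]
  · have hT1 : klDiv π π_ref = ⊤ := klDiv_of_not hGood
    have hT2 : klDiv π ν = ⊤ := by
      refine klDiv_of_not ?_
      rintro ⟨h1, h2⟩
      have hacr : π ≪ π_ref := h1.trans hν_ac
      refine hGood ⟨hacr, ?_⟩
      have hf₀int : Integrable f₀ π := by
        refine Integrable.mono' (integrable_const Bf) hf₀m.aestronglyMeasurable ?_
        filter_upwards [hacr.ae_le haeq] with x ⟨_, hb2, _, _⟩
        rw [Real.norm_eq_abs]; exact hb2
      have heq : llr π π_ref =ᵐ[π] fun x => llr π ν x + f₀ x - Real.log (∫ x, Real.exp (f₀ x) ∂π_ref) := by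
        have h3 := llr_tilted_right hacr hexp_f₀
        rw [← hν_t] at h3
        filter_upwards [h3] with x hx
        rw [hx]; ring
      refine Integrable.congr ?_ heq.symm
      exact ((h2.add hf₀int).sub (integrable_const _))
    have hFbot : F π = ⊥ := by
      rw [hF, hT1, hT2]
      rw [show ((η : ℝ) : EReal) * (⊤ : EReal) = (⊤ : EReal) from
        EReal.coe_mul_top_of_pos hη]
      rw [sub_eq_add_neg, sub_eq_add_neg]
      simp
    constructor
    · rw [hFbot]; exact bot_le
    · constructor
      · intro he
        rw [hFbot, hFT'] at he
        exact absurd he.symm (EReal.coe_ne_bot c)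
      · intro he
        exact absurd (he ▸ ⟨hT_ac, hint_T⟩ : π ≪ π_ref ∧ Integrable (llr π π_ref) π) hGood
end

section
/- The Gibbs measure π* is the unique fixed point of the proximal update among probability measures with bounded positive density: if ν is a probability measure with density q with respect to π_ref satisfying 0 < ε ≤ q ≤ C π_ref-a.e. and T(ν) = ν, then ν = π*. -/
open MeasureTheory

/-- The Gibbs measure `π*` is the unique fixed point of the proximal update among
probability measures with bounded positive density: if `ν` has density `q` w.r.t. `π_ref`
with `0 < ε ≤ q ≤ C` a.e. and `T(ν) = ν`, then `ν = π*`. -/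
theorem gibbs_unique_fixed_point_of_proximal_update
    {X : Type*} [MeasurableSpace X]
    (π_ref : Measure X) [IsProbabilityMeasure π_ref]
    (R : X → ℝ) (hRmeas : Measurable R) (M : ℝ) (hRbd : ∀ x, |R x| ≤ M)
    (β : ℝ) (hβ : 0 < β) (η : ℝ) (hη : 0 < η)
    (Z : ℝ) (hZ : Z = ∫ x, Real.exp (R x / β) ∂π_ref)
    (πstar : Measure X)
    (hπstar : πstar = π_ref.withDensity (fun x => ENNReal.ofReal (Real.exp (R x / β) / Z)))
    (ε C : ℝ) (hε : 0 < ε)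
    (q : X → ℝ) (hqmeas : Measurable q)
    (hqbd : ∀ᵐ x ∂π_ref, ε ≤ q x ∧ q x ≤ C)
    (ν : Measure X) [IsProbabilityMeasure ν]
    (hν : ν = π_ref.withDensity (fun x => ENNReal.ofReal (q x)))
    (N : ℝ)
    (hN : N = ∫ x, Real.exp (η * R x / ((1 + η) * β)) * q x ^ ((1 : ℝ) / (1 + η)) ∂π_ref)
    (hfixed : π_ref.withDensity (fun x =>
      ENNReal.ofReal (Real.exp (η * R x / ((1 + η) * β)) * q x ^ ((1 : ℝ) / (1 + η)) / N)) = ν) :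
    ν = πstar := by
  have hη1 : (0:ℝ) < 1 + η := by linarith
  -- densities agree a.e.
  have hmeas1 : Measurable (fun x =>
      ENNReal.ofReal (Real.exp (η * R x / ((1 + η) * β)) * q x ^ ((1 : ℝ) / (1 + η)) / N)) := by
    apply Measurable.ennreal_ofReal
    exact (((hRmeas.const_mul η).div_const _).exp.mul (hqmeas.pow_const _)).div_const _
  have hdens : (fun x =>
      ENNReal.ofReal (Real.exp (η * R x / ((1 + η) * β)) * q x ^ ((1 : ℝ) / (1 + η)) / N))
      =ᵐ[π_ref] (fun x => ENNReal.ofReal (q x)) := by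
    rw [← withDensity_eq_iff_of_sigmaFinite hmeas1.aemeasurable
      (hqmeas.ennreal_ofReal).aemeasurable, hfixed, hν]
  -- pointwise consequence
  have key : ∀ᵐ x ∂π_ref, 0 < N ∧ q x = Real.exp (R x / β) / N ^ ((1 + η) / η) := by
    filter_upwards [hqbd, hdens] with x hx heq
    have hq0 : 0 < q x := lt_of_lt_of_le hε hx.1
    set a := η * R x / ((1 + η) * β) with ha
    set p := (1 : ℝ) / (1 + η) with hp
    have hpos : 0 < Real.exp a * q x ^ p :=
      mul_pos (Real.exp_pos _) (Real.rpow_pos_of_pos hq0 _)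
    have hN0 : 0 < N := by
      by_contra h
      push_neg at h
      have hle : Real.exp a * q x ^ p / N ≤ 0 := div_nonpos_of_nonneg_of_nonpos hpos.le h
      rw [ENNReal.ofReal_of_nonpos hle] at heq
      exact absurd heq.symm (ENNReal.ofReal_pos.mpr hq0).ne'
    have heq' : Real.exp a * q x ^ p / N = q x := by
      rwa [ENNReal.ofReal_eq_ofReal_iff (div_pos hpos hN0).le hq0.le] at heq
    refine ⟨hN0, ?_⟩
    -- q ^ (1 - p) = exp a / N
    have hqp : q x ^ p ≠ 0 := (Real.rpow_pos_of_pos hq0 _).ne'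
    have h2 : q x ^ (1 - p) = Real.exp a / N := by
      rw [Real.rpow_sub hq0, Real.rpow_one]
      field_simp at heq' ⊢
      linarith [heq']
    have hs : (1 - p) * ((1 + η) / η) = 1 := by
      rw [hp]; field_simp; ring
    have : q x = (q x ^ (1 - p)) ^ ((1 + η) / η) := by
      rw [← Real.rpow_mul hq0.le, hs, Real.rpow_one]
    rw [this, h2, Real.div_rpow (Real.exp_pos _).le hN0.le,
      Real.rpow_def_of_pos (Real.exp_pos _), Real.log_exp]
    congr 2
    rw [ha]; field_simp
  -- N is positive
  have hne : π_ref ≠ 0 := IsProbabilityMeasure.ne_zero π_ref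
  haveI : (ae π_ref).NeBot := ae_neBot.mpr hne
  obtain ⟨x₀, hN0, -⟩ := key.exists
  set K : ℝ := N ^ ((1 + η) / η) with hK
  have hK0 : 0 < K := Real.rpow_pos_of_pos hN0 _
  -- integral of q is 1
  have hq_nonneg : 0 ≤ᵐ[π_ref] q := hqbd.mono fun x hx => le_trans hε.le hx.1
  have hint1 : ∫ x, q x ∂π_ref = 1 := by
    have h1 : (∫⁻ x, ENNReal.ofReal (q x) ∂π_ref) = 1 := by
      have := measure_univ (μ := ν)
      rw [hν, withDensity_apply _ MeasurableSet.univ, Measure.restrict_univ] at this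
      exact this
    rw [integral_eq_lintegral_of_nonneg_ae hq_nonneg hqmeas.aestronglyMeasurable, h1]
    simp
  have hint2 : ∫ x, q x ∂π_ref = Z / K := by
    have : ∫ x, q x ∂π_ref = ∫ x, Real.exp (R x / β) / K ∂π_ref :=
      integral_congr_ae (key.mono fun x hx => hx.2)
    rw [this, integral_div, ← hZ]
  have hZK : Z = K := by
    rw [hint1] at hint2
    field_simp at hint2
    linarith
  -- conclude
  rw [hν, hπstar]
  apply withDensity_congr_ae
  filter_upwards [key] with x hx
  rw [hx.2, hZK]
end

section
/- Define the iterates π_0 = π_ref and π_{k+1} = T(π_k) for k ≥ 0. Then for every k ≥ 0, π_k has density with respect to π_ref given by dπ_k/dπ_ref(x) = exp((1 − (1+η)^{−k})·R(x)/β) / Z_k, where Z_k = ∫ exp((1 − (1+η)^{−k})·R/β) dπ_ref. -/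
open MeasureTheory

/-- For the proximal iterates `π_0 = π_ref`, `π_{k+1} = T(π_k)` (where `T(ν)` has density
`exp(ηR/((1+η)β))·q^{1/(1+η)} / N(ν)` w.r.t. `π_ref`, `q` being the density of `ν`),
each iterate `π_k` has density `exp((1 − (1+η)^{−k})·R/β) / Z_k` with respect to `π_ref`,
where `Z_k = ∫ exp((1 − (1+η)^{−k})·R/β) dπ_ref`. -/
theorem proximal_iterates_density
    {X : Type*} [MeasurableSpace X]
    (π_ref : Measure X) [IsProbabilityMeasure π_ref]
    (R : X → ℝ) (hRmeas : Measurable R) (M : ℝ) (hRbd : ∀ x, |R x| ≤ M)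
    (β : ℝ) (hβ : 0 < β) (η : ℝ) (hη : 0 < η)
    (πseq : ℕ → Measure X)
    (h0 : πseq 0 = π_ref)
    (hrec : ∀ k : ℕ, πseq (k + 1) = π_ref.withDensity (fun x =>
      ENNReal.ofReal (Real.exp (η * R x / ((1 + η) * β))
        * ((πseq k).rnDeriv π_ref x).toReal ^ ((1 : ℝ) / (1 + η))
        / (∫ y, Real.exp (η * R y / ((1 + η) * β))
            * ((πseq k).rnDeriv π_ref y).toReal ^ ((1 : ℝ) / (1 + η)) ∂π_ref)))) :
    ∀ k : ℕ, πseq k = π_ref.withDensity (fun x =>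
      ENNReal.ofReal (Real.exp ((1 - ((1 + η) ^ k)⁻¹) * R x / β)
        / (∫ y, Real.exp ((1 - ((1 + η) ^ k)⁻¹) * R y / β) ∂π_ref))) := by
  have h1η : (0:ℝ) < 1 + η := by linarith
  have hβ' : β ≠ 0 := ne_of_gt hβ
  set c : ℕ → ℝ := fun k => 1 - ((1 + η) ^ k)⁻¹ with hc
  set Z : ℕ → ℝ := fun k => ∫ y, Real.exp (c k * R y / β) ∂π_ref with hZ
  -- integrability of bounded exponentials
  have hint : ∀ a : ℝ, Integrable (fun x => Real.exp (a * R x / β)) π_ref := by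
    intro a
    refine (integrable_const (Real.exp (|a| * M / β))).mono'
      (Real.measurable_exp.comp ((hRmeas.const_mul a).div_const β)).aestronglyMeasurable ?_
    filter_upwards with x
    rw [Real.norm_eq_abs, abs_of_pos (Real.exp_pos _), Real.exp_le_exp]
    have h1 : a * R x ≤ |a| * M := by
      calc a * R x ≤ |a * R x| := le_abs_self _
        _ = |a| * |R x| := abs_mul _ _
        _ ≤ |a| * M := by
            exact mul_le_mul_of_nonneg_left (hRbd x) (abs_nonneg a)
    exact div_le_div_of_nonneg_right h1 hβ.le |>.trans_eq rfl
  -- positivity of the normalizers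
  have hZpos : ∀ k, 0 < Z k := by
    intro k
    have hle : ∀ x, Real.exp (-(|c k| * M) / β) ≤ Real.exp (c k * R x / β) := by
      intro x
      rw [Real.exp_le_exp]
      apply div_le_div_of_nonneg_right _ hβ.le
      calc -(|c k| * M) ≤ -|c k * R x| := by
            rw [neg_le_neg_iff, abs_mul]
            exact mul_le_mul_of_nonneg_left (hRbd x) (abs_nonneg _)
        _ ≤ c k * R x := neg_abs_le _
    have := integral_mono (integrable_const _) (hint (c k)) hle
    rw [integral_const, probReal_univ, one_smul] at this
    exact lt_of_lt_of_le (Real.exp_pos _) this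
  intro k
  induction k with
  | zero =>
      rw [h0]
      have hc0 : c 0 = 0 := by simp [hc]
      have hZ0 : Z 0 = 1 := by simp [hZ, hc0]
      rw [show (fun x => ENNReal.ofReal (Real.exp (c 0 * R x / β) / Z 0)) =
          fun _ => (1 : ENNReal) from funext fun x => by simp [hc0, hZ0]]
      exact (withDensity_one (μ := π_ref)).symm
  | succ k ih =>
      rw [hrec k, ih]
      set p : ℝ := (1:ℝ) / (1 + η) with hp
      have hmeas : Measurable fun x => ENNReal.ofReal (Real.exp (c k * R x / β) / Z k) :=
        ENNReal.measurable_ofReal.comp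
          ((Real.measurable_exp.comp ((hRmeas.const_mul _).div_const β)).div_const _)
      have hrn : (π_ref.withDensity fun x => ENNReal.ofReal (Real.exp (c k * R x / β) / Z k)).rnDeriv
          π_ref =ᵐ[π_ref] fun x => ENNReal.ofReal (Real.exp (c k * R x / β) / Z k) :=
        Measure.rnDeriv_withDensity π_ref hmeas
      have hg : ∀ x, (ENNReal.ofReal (Real.exp (c k * R x / β) / Z k)).toReal
          = Real.exp (c k * R x / β) / Z k := fun x =>
        ENNReal.toReal_ofReal (div_nonneg (Real.exp_pos _).le (hZpos k).le)
      -- key pointwise algebra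
      have key : ∀ x, Real.exp (η * R x / ((1 + η) * β))
          * (Real.exp (c k * R x / β) / Z k) ^ p
          = Real.exp (c (k+1) * R x / β) / (Z k) ^ p := by
        intro x
        rw [Real.div_rpow (Real.exp_pos _).le (hZpos k).le,
          Real.rpow_def_of_pos (Real.exp_pos _), Real.log_exp, ← mul_div_assoc,
          ← Real.exp_add]
        congr 1
        have hpow : ((1:ℝ) + η) ^ k ≠ 0 := ne_of_gt (pow_pos h1η k)
        simp only [hc, hp, pow_succ]
        field_simp
        ring
      -- rewrite the integral
      have hintegral : (∫ y, Real.exp (η * R y / ((1 + η) * β))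
          * ((π_ref.withDensity fun x => ENNReal.ofReal (Real.exp (c k * R x / β) / Z k)).rnDeriv
              π_ref y).toReal ^ p ∂π_ref) = Z (k+1) / (Z k) ^ p := by
        have : (∫ y, Real.exp (η * R y / ((1 + η) * β))
            * ((π_ref.withDensity fun x =>
              ENNReal.ofReal (Real.exp (c k * R x / β) / Z k)).rnDeriv π_ref y).toReal ^ p ∂π_ref)
            = ∫ y, Real.exp (c (k+1) * R y / β) / (Z k) ^ p ∂π_ref := by
          refine integral_congr_ae ?_
          filter_upwards [hrn] with y hy
          rw [hy, hg y, key y]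
        rw [this, integral_div]
      refine withDensity_congr_ae ?_
      filter_upwards [hrn] with x hx
      have hZkp : (Z k : ℝ) ^ p ≠ 0 := ne_of_gt (Real.rpow_pos_of_pos (hZpos k) p)
      show _ = ENNReal.ofReal (Real.exp (c (k+1) * R x / β) / Z (k+1))
      rw [hintegral, hx, hg x, key x, div_div_div_cancel_right₀ hZkp]
end

section
/- Define the iterates π_0 = π_ref and π_{k+1} = T(π_k), and suppose |R(x)| ≤ M for all x. Then for every k ≥ 0, KL(π_k‖π*) ≤ (2M/β)·(1+η)^{−k}; in particular KL(π_k‖π*) → 0 as k → ∞, so the proximal policy-gradient iteration converges to the target Gibbs measure π* at a geometric rate. -/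
open MeasureTheory

/-- For the proximal iterates `π_0 = π_ref`, `π_{k+1} = T(π_k)` and a reward with
`|R| ≤ M`, one has `KL(π_k‖π*) ≤ (2M/β)·(1+η)^{−k}` for all `k`; in particular
`KL(π_k‖π*) → 0`, i.e. the proximal policy-gradient iteration converges to the target
Gibbs measure `π*` at a geometric rate. -/
theorem proximal_iterates_geometric_convergence
    {X : Type*} [MeasurableSpace X]
    (π_ref : Measure X) [IsProbabilityMeasure π_ref]
    (R : X → ℝ) (hRmeas : Measurable R) (M : ℝ) (hRbd : ∀ x, |R x| ≤ M)
    (β : ℝ) (hβ : 0 < β) (η : ℝ) (hη : 0 < η)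
    (Z : ℝ) (hZ : Z = ∫ x, Real.exp (R x / β) ∂π_ref)
    (πstar : Measure X)
    (hπstar : πstar = π_ref.withDensity (fun x => ENNReal.ofReal (Real.exp (R x / β) / Z)))
    (πseq : ℕ → Measure X)
    (h0 : πseq 0 = π_ref)
    (hrec : ∀ k : ℕ, πseq (k + 1) = π_ref.withDensity (fun x =>
      ENNReal.ofReal (Real.exp (η * R x / ((1 + η) * β))
        * ((πseq k).rnDeriv π_ref x).toReal ^ ((1 : ℝ) / (1 + η))
        / (∫ y, Real.exp (η * R y / ((1 + η) * β))
            * ((πseq k).rnDeriv π_ref y).toReal ^ ((1 : ℝ) / (1 + η)) ∂π_ref)))) :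
    (∀ k : ℕ, klDiv (πseq k) πstar ≤ ((2 * M / β * ((1 + η) ^ k)⁻¹ : ℝ) : EReal))
    ∧ Filter.Tendsto (fun k => klDiv (πseq k) πstar) Filter.atTop (nhds 0) := by
  have hβ' : β ≠ 0 := hβ.ne'
  have h1η : (0:ℝ) < 1 + η := by linarith
  have h1η' : (1:ℝ) + η ≠ 0 := h1η.ne'
  have hM : 0 ≤ M := by
    rcases isEmpty_or_nonempty X with hX | hX
    · exfalso
      have h1 : π_ref Set.univ = 1 := measure_univ
      rw [Set.univ_eq_empty_iff.mpr hX] at h1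
      simp at h1
    · obtain ⟨x⟩ := hX
      exact le_trans (abs_nonneg _) (hRbd x)
  -- the abbreviations
  set t : ℕ → ℝ := fun k => ((1 + η) ^ k)⁻¹ with ht
  have htpos : ∀ k, 0 < t k := fun k => inv_pos.mpr (pow_pos h1η k)
  set a : ℕ → ℝ := fun k => (1 - t k) / β with ha
  set E : ℝ → X → ℝ := fun c x => Real.exp (c * R x) with hE
  have hEmeas : ∀ c, Measurable (E c) := fun c => (hRmeas.const_mul c).exp
  have hEpos : ∀ c x, (0:ℝ) < E c x := fun c x => Real.exp_pos _
  have hEbd : ∀ c x, E c x ≤ Real.exp (|c| * M) := by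
    intro c x
    apply Real.exp_le_exp.mpr
    calc c * R x ≤ |c * R x| := le_abs_self _
      _ = |c| * |R x| := abs_mul _ _
      _ ≤ |c| * M := mul_le_mul_of_nonneg_left (hRbd x) (abs_nonneg c)
  have hEint : ∀ c, Integrable (E c) π_ref := by
    intro c
    refine Integrable.mono' (integrable_const (Real.exp (|c| * M)))
      (hEmeas c).aestronglyMeasurable ?_
    filter_upwards with x
    rw [Real.norm_eq_abs, abs_of_pos (hEpos c x)]
    exact hEbd c x
  set Zf : ℝ → ℝ := fun c => ∫ x, E c x ∂π_ref with hZf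
  have hZpos : ∀ c, 0 < Zf c := fun c => integral_exp_pos (hEint c)
  have hZcomp : ∀ c d : ℝ, Zf c ≤ Zf d * Real.exp (|c - d| * M) := by
    intro c d
    have hpt : ∀ x, E c x ≤ E d x * Real.exp (|c - d| * M) := by
      intro x
      have h1 : E c x = E d x * E (c - d) x := by
        simp only [hE, ← Real.exp_add]
        ring_nf
      rw [h1]
      exact mul_le_mul_of_nonneg_left (hEbd (c - d) x) (hEpos d x).le
    calc Zf c ≤ ∫ x, E d x * Real.exp (|c - d| * M) ∂π_ref :=
          integral_mono (hEint c) ((hEint d).mul_const _) hpt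
      _ = Zf d * Real.exp (|c - d| * M) := integral_mul_const _ _
  have hlogZ : ∀ c d : ℝ, |Real.log (Zf c) - Real.log (Zf d)| ≤ |c - d| * M := by
    intro c d
    have key : ∀ c d : ℝ, Real.log (Zf c) - Real.log (Zf d) ≤ |c - d| * M := by
      intro c d
      have h1 : Real.log (Zf c) ≤ Real.log (Zf d * Real.exp (|c - d| * M)) :=
        (Real.log_le_log_iff (hZpos c) (mul_pos (hZpos d) (Real.exp_pos _))).mpr (hZcomp c d)
      rw [Real.log_mul (hZpos d).ne' (Real.exp_pos _).ne', Real.log_exp] at h1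
      linarith
    rw [abs_le]
    constructor
    · have := key d c
      rw [abs_sub_comm] at this
      linarith
    · exact key c d
  have hZeq : Z = Zf β⁻¹ := by
    rw [hZ, hZf]
    congr 1
    funext x
    simp only [hE, div_eq_inv_mul]
  -- probability measure lemma
  have hprob : ∀ c : ℝ, IsProbabilityMeasure
      (π_ref.withDensity (fun x => ENNReal.ofReal (E c x / Zf c))) := by
    intro c
    constructor
    rw [withDensity_apply _ MeasurableSet.univ, Measure.restrict_univ,
      ← ofReal_integral_eq_lintegral_ofReal ((hEint c).div_const _)
        (Filter.Eventually.of_forall fun x => div_nonneg (hEpos c x).le (hZpos c).le),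
      integral_div, div_self (hZpos c).ne', ENNReal.ofReal_one]
  have hπstar' : πstar = π_ref.withDensity (fun x => ENNReal.ofReal (E β⁻¹ x / Zf β⁻¹)) := by
    rw [hπstar, ← hZeq]
    congr 1
    funext x
    simp only [hE, div_eq_inv_mul]
  haveI hprobstar : IsProbabilityMeasure πstar := by
    rw [hπstar']; exact hprob β⁻¹
  -- π_ref ≪ πstar
  have hrefstar : π_ref ≪ πstar := by
    rw [hπstar']
    refine Measure.AbsolutelyContinuous.mk fun s hs h0s => ?_
    rw [withDensity_apply _ hs] at h0s
    have hlb : ∀ x, Real.exp (-(|β⁻¹| * M)) / Zf β⁻¹ ≤ E β⁻¹ x / Zf β⁻¹ := by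
      intro x
      have hnum : Real.exp (-(|β⁻¹| * M)) ≤ E β⁻¹ x := by
        simp only [hE]
        apply Real.exp_le_exp.mpr
        have h5 : -(|β⁻¹| * M) ≤ -|β⁻¹ * R x| := by
          rw [neg_le_neg_iff, abs_mul]
          exact mul_le_mul_of_nonneg_left (hRbd x) (abs_nonneg _)
        exact le_trans h5 (neg_abs_le _)
      gcongr
    have h2 : ENNReal.ofReal (Real.exp (-(|β⁻¹| * M)) / Zf β⁻¹) * π_ref s ≤ 0 := by
      rw [← setLIntegral_const s _, ← h0s]
      exact setLIntegral_mono ((hEmeas β⁻¹).div_const _).ennreal_ofReal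
        fun x _ => ENNReal.ofReal_le_ofReal (hlb x)
    have h3 : ENNReal.ofReal (Real.exp (-(|β⁻¹| * M)) / Zf β⁻¹) ≠ 0 := by
      simp only [ne_eq, ENNReal.ofReal_eq_zero, not_le]
      exact div_pos (Real.exp_pos _) (hZpos _)
    have := le_antisymm h2 (by simp)
    exact (mul_eq_zero.mp this).resolve_left h3
  -- densities of the iterates
  have hdmeas : ∀ c, Measurable fun x => ENNReal.ofReal (E c x / Zf c) :=
    fun c => ((hEmeas c).div_const _).ennreal_ofReal
  have hdens : ∀ k, πseq k = π_ref.withDensity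
      (fun x => ENNReal.ofReal (E (a k) x / Zf (a k))) := by
    intro k
    induction k with
    | zero =>
      have ha0 : a 0 = 0 := by simp [ha, ht]
      have hE0 : ∀ x, E (a 0) x = 1 := by intro x; rw [ha0]; simp [hE]
      have hZ0 : Zf (a 0) = 1 := by
        rw [hZf]
        simp only [hE0]
        simp
      have : (fun x => ENNReal.ofReal (E (a 0) x / Zf (a 0))) = 1 := by
        funext x
        rw [hE0, hZ0]
        simp
      rw [h0, this, withDensity_one]
    | succ k ih =>
      rw [hrec k]
      have hrn : (πseq k).rnDeriv π_ref =ᵐ[π_ref]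
          fun x => ENNReal.ofReal (E (a k) x / Zf (a k)) := by
        rw [ih]
        exact Measure.rnDeriv_withDensity π_ref (hdmeas (a k))
      have hexp : ∀ r : ℝ, η * r / ((1 + η) * β) + a k * r * ((1:ℝ) / (1 + η)) = a (k+1) * r := by
        intro r
        simp only [ha, ht, pow_succ]
        have hpk : ((1:ℝ) + η) ^ k ≠ 0 := pow_ne_zero k h1η'
        field_simp
        ring
      have hfun : (fun x => Real.exp (η * R x / ((1 + η) * β))
            * ((πseq k).rnDeriv π_ref x).toReal ^ ((1:ℝ)/(1+η)))
          =ᵐ[π_ref] fun x => E (a (k+1)) x / (Zf (a k)) ^ ((1:ℝ)/(1+η)) := by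
        have hnum : ∀ x, Real.exp (η * R x / ((1 + η) * β)) * (E (a k) x) ^ ((1:ℝ)/(1+η))
            = E (a (k+1)) x := by
          intro x
          have h1 : (E (a k) x) ^ ((1:ℝ)/(1+η))
              = Real.exp (a k * R x * ((1:ℝ)/(1+η))) := by
            simp only [hE]
            rw [Real.rpow_def_of_pos (Real.exp_pos _), Real.log_exp]
          rw [h1]
          simp only [hE, ← Real.exp_add]
          exact congrArg Real.exp (hexp (R x))
        filter_upwards [hrn] with x hx
        rw [hx, ENNReal.toReal_ofReal (div_nonneg (hEpos _ x).le (hZpos _).le),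
          Real.div_rpow (hEpos _ x).le (hZpos _).le, ← mul_div_assoc, hnum x]
      have hN : (∫ y, Real.exp (η * R y / ((1 + η) * β))
            * ((πseq k).rnDeriv π_ref y).toReal ^ ((1:ℝ)/(1+η)) ∂π_ref)
          = Zf (a (k+1)) / (Zf (a k)) ^ ((1:ℝ)/(1+η)) := by
        rw [integral_congr_ae hfun, integral_div]
      apply withDensity_congr_ae
      filter_upwards [hfun] with x hx
      have hc : (0:ℝ) < (Zf (a k)) ^ ((1:ℝ)/(1+η)) := Real.rpow_pos_of_pos (hZpos _) _
      rw [hN, hx, div_div_div_cancel_right₀ hc.ne']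
  -- the key computation for each k
  have key : ∀ k, ∃ I : ℝ, klDiv (πseq k) πstar = (I : EReal) ∧ |I| ≤ 2 * M / β * t k := by
    intro k
    have hk := hdens k
    haveI hpk : IsProbabilityMeasure (πseq k) := by rw [hk]; exact hprob (a k)
    have hac : πseq k ≪ πstar := by
      rw [hk]
      exact (withDensity_absolutelyContinuous π_ref _).trans hrefstar
    -- rnDeriv of πseq k w.r.t. πstar
    have hratmeas : Measurable fun x => ENNReal.ofReal
        ((E (a k) x / Zf (a k)) / (E β⁻¹ x / Zf β⁻¹)) :=
      (((hEmeas (a k)).div_const _).div ((hEmeas β⁻¹).div_const _)).ennreal_ofReal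
    have hmul : πseq k = πstar.withDensity (fun x => ENNReal.ofReal
        ((E (a k) x / Zf (a k)) / (E β⁻¹ x / Zf β⁻¹))) := by
      rw [hπstar', ← withDensity_mul π_ref (hdmeas β⁻¹) hratmeas, hk]
      congr 1
      funext x
      have hqs : (0:ℝ) < E β⁻¹ x / Zf β⁻¹ := div_pos (hEpos _ x) (hZpos _)
      rw [Pi.mul_apply, ← ENNReal.ofReal_mul hqs.le, mul_div_cancel₀ _ hqs.ne']
    have hrnstar : (πseq k).rnDeriv πstar =ᵐ[πstar] fun x => ENNReal.ofReal
        ((E (a k) x / Zf (a k)) / (E β⁻¹ x / Zf β⁻¹)) := by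
      nth_rewrite 1 [hmul]
      exact Measure.rnDeriv_withDensity πstar hratmeas
    set C : ℝ := Real.log Z - Real.log (Zf (a k)) with hC
    have hllr : llr (πseq k) πstar =ᵐ[πseq k]
        fun x => (a k - β⁻¹) * R x + C := by
      filter_upwards [hac.ae_le hrnstar] with x hx
      have hq : (0:ℝ) < E (a k) x / Zf (a k) := div_pos (hEpos _ x) (hZpos _)
      have hqs : (0:ℝ) < E β⁻¹ x / Zf β⁻¹ := div_pos (hEpos _ x) (hZpos _)
      rw [llr_def]
      simp only
      rw [hx, ENNReal.toReal_ofReal (div_nonneg hq.le hqs.le),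
        Real.log_div hq.ne' hqs.ne', Real.log_div (hEpos _ x).ne' (hZpos _).ne',
        Real.log_div (hEpos _ x).ne' (hZpos _).ne']
      simp only [hE, Real.log_exp]
      rw [hC, hZeq]
      ring
    have hRint : Integrable R (πseq k) := by
      refine Integrable.mono' (integrable_const M) hRmeas.aestronglyMeasurable ?_
      filter_upwards with x
      rw [Real.norm_eq_abs]
      exact hRbd x
    have hgint : Integrable (fun x => (a k - β⁻¹) * R x + C) (πseq k) :=
      (hRint.const_mul _).add (integrable_const _)
    have hlint : Integrable (llr (πseq k) πstar) (πseq k) := hgint.congr hllr.symm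
    -- bounds
    have habk : |a k - β⁻¹| = t k / β := by
      have h1 : a k - β⁻¹ = -(t k / β) := by
        simp only [ha]
        field_simp
        ring
      rw [h1, abs_neg, abs_of_nonneg (div_nonneg (htpos k).le hβ.le)]
    have hCbd : |C| ≤ t k / β * M := by
      have h1 : |β⁻¹ - a k| = t k / β := by rw [abs_sub_comm, habk]
      have := hlogZ β⁻¹ (a k)
      rw [h1] at this
      rw [hC, hZeq]
      exact this
    have hptbd : ∀ x, |(a k - β⁻¹) * R x + C| ≤ 2 * M / β * t k := by
      intro x
      calc |(a k - β⁻¹) * R x + C| ≤ |(a k - β⁻¹) * R x| + |C| := abs_add_le _ _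
        _ ≤ |a k - β⁻¹| * M + t k / β * M := by
            refine add_le_add ?_ hCbd
            rw [abs_mul]
            exact mul_le_mul_of_nonneg_left (hRbd x) (abs_nonneg _)
        _ = 2 * M / β * t k := by rw [habk]; ring
    refine ⟨∫ x, llr (πseq k) πstar x ∂(πseq k), ?_, ?_⟩
    · rw [klDiv, if_pos ⟨hac, hlint⟩]
    · rw [integral_congr_ae hllr]
      have hb := norm_integral_le_of_norm_le_const (μ := πseq k)
        (f := fun x => (a k - β⁻¹) * R x + C) (C := 2 * M / β * t k)
        (Filter.Eventually.of_forall fun x => by rw [Real.norm_eq_abs]; exact hptbd x)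
      rwa [Real.norm_eq_abs, probReal_univ, mul_one] at hb
  constructor
  · intro k
    obtain ⟨I, hIe, hIb⟩ := key k
    rw [hIe]
    exact_mod_cast EReal.coe_le_coe_iff.mpr (le_of_abs_le hIb)
  · choose I hIe hIb using key
    have hD : Filter.Tendsto (fun k => 2 * M / β * t k) Filter.atTop (nhds 0) := by
      have h3 : Filter.Tendsto (fun k : ℕ => 2 * M / β * ((1 + η)⁻¹) ^ k)
          Filter.atTop (nhds (2 * M / β * 0)) :=
        (tendsto_pow_atTop_nhds_zero_of_lt_one (by positivity)
          (inv_lt_one_of_one_lt₀ (by linarith))).const_mul _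
      rw [mul_zero] at h3
      refine h3.congr fun k => ?_
      simp [ht, inv_pow]
    have hI0 : Filter.Tendsto I Filter.atTop (nhds 0) := by
      refine squeeze_zero_norm (fun k => ?_) hD
      rw [Real.norm_eq_abs]
      exact hIb k
    have hfe : (fun k => klDiv (πseq k) πstar) = fun k => ((I k : ℝ) : EReal) :=
      funext fun k => hIe k
    rw [hfe]
    have := EReal.tendsto_coe.mpr hI0
    simpa using this
end

section
/- Let ν be a probability measure with density q with respect to π_ref satisfying 0 < ε ≤ q ≤ C π_ref-a.e., and define the KL-regularized objective J(π) = ∫ R dπ − β·KL(π‖π_ref). Then the proximal update monotonically improves the objective: J(T(ν)) ≥ J(ν) + (β/η)·KL(T(ν)‖ν); in particular J(T(ν)) ≥ J(ν). -/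
open MeasureTheory
open scoped ENNReal NNReal

/-- Integrability from an a.e. bound on a finite measure. -/
lemma integrable_of_ae_abs_le {X : Type*} [MeasurableSpace X] {μ : Measure X}
    [IsFiniteMeasure μ] {g : X → ℝ} {K : ℝ}
    (hg : AEStronglyMeasurable g μ) (h : ∀ᵐ x ∂μ, |g x| ≤ K) : Integrable g μ := by
  refine (integrable_const K).mono' hg ?_
  filter_upwards [h] with x hx
  rwa [Real.norm_eq_abs]

/-- Change of variables for a `withDensity` with an `ENNReal.ofReal` density. -/
lemma integral_withDensity_ofReal {X : Type*} [MeasurableSpace X] {μ : Measure X}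
    {f : X → ℝ} (hf : Measurable f) (hf0 : 0 ≤ᵐ[μ] f) (g : X → ℝ) :
    ∫ x, g x ∂(μ.withDensity fun x => ENNReal.ofReal (f x)) = ∫ x, f x * g x ∂μ := by
  have h : (fun x => ENNReal.ofReal (f x)) = fun x => ((f x).toNNReal : ℝ≥0∞) := rfl
  rw [h, integral_withDensity_eq_integral_smul hf.real_toNNReal g]
  refine integral_congr_ae ?_
  filter_upwards [hf0] with x hx
  simp [NNReal.smul_def, Real.coe_toNNReal _ hx]

set_option maxHeartbeats 1000000 in
/-- The proximal update monotonically improves the KL-regularized objective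
`J(π) = ∫ R dπ − β·KL(π‖π_ref)`: for a probability measure `ν` with density `q`
(with `0 < ε ≤ q ≤ C` a.e.) w.r.t. `π_ref`, one has
`J(T(ν)) ≥ J(ν) + (β/η)·KL(T(ν)‖ν)`, and in particular `J(T(ν)) ≥ J(ν)`. -/
theorem proximal_update_monotone_improvement
    {X : Type*} [MeasurableSpace X]
    (π_ref : Measure X) [IsProbabilityMeasure π_ref]
    (R : X → ℝ) (hRmeas : Measurable R) (M : ℝ) (hRbd : ∀ x, |R x| ≤ M)
    (β : ℝ) (hβ : 0 < β) (η : ℝ) (hη : 0 < η)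
    (ε C : ℝ) (hε : 0 < ε)
    (q : X → ℝ) (hqmeas : Measurable q)
    (hqbd : ∀ᵐ x ∂π_ref, ε ≤ q x ∧ q x ≤ C)
    (ν : Measure X) [IsProbabilityMeasure ν]
    (hν : ν = π_ref.withDensity (fun x => ENNReal.ofReal (q x)))
    (N : ℝ)
    (hN : N = ∫ x, Real.exp (η * R x / ((1 + η) * β)) * q x ^ ((1 : ℝ) / (1 + η)) ∂π_ref)
    (Tν : Measure X)
    (hTν : Tν = π_ref.withDensity (fun x =>
      ENNReal.ofReal (Real.exp (η * R x / ((1 + η) * β)) * q x ^ ((1 : ℝ) / (1 + η)) / N)))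
    (J : Measure X → EReal)
    (hJ : ∀ π : Measure X,
      J π = ((∫ x, R x ∂π : ℝ) : EReal) - (β : EReal) * klDiv π π_ref) :
    J Tν ≥ J ν + ((β / η : ℝ) : EReal) * klDiv Tν ν ∧ J Tν ≥ J ν := by
  classical
  have h1η : (0:ℝ) < 1 + η := by linarith
  -- basic constants
  have hne : (ae π_ref).NeBot := ae_neBot.mpr (IsProbabilityMeasure.ne_zero π_ref)
  obtain ⟨x₀, hx₀⟩ := hqbd.exists
  have hMnn : 0 ≤ M := (abs_nonneg _).trans (hRbd x₀)
  have hC : 0 < C := by linarith [hx₀.1, hx₀.2]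
  set a : ℝ := η / ((1 + η) * β) with ha
  have ha_pos : 0 < a := by positivity
  set s : ℝ := (1:ℝ) / (1 + η) with hs
  have hs_pos : 0 < s := by positivity
  set p : X → ℝ := fun x => Real.exp (η * R x / ((1 + η) * β)) * q x ^ s with hp
  have hp_meas : Measurable p := by
    apply Measurable.mul
    · fun_prop
    · fun_prop
  set m₀ : ℝ := Real.exp (-(η * M / ((1 + η) * β))) * ε ^ s with hm₀
  set M₀ : ℝ := Real.exp (η * M / ((1 + η) * β)) * C ^ s with hM₀
  have hm₀_pos : 0 < m₀ := by positivity
  have hp_bdd : ∀ᵐ x ∂π_ref, m₀ ≤ p x ∧ p x ≤ M₀ := by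
    filter_upwards [hqbd] with x hx
    have hqx : 0 < q x := lt_of_lt_of_le hε hx.1
    have h1 : -(η * M / ((1 + η) * β)) ≤ η * R x / ((1 + η) * β) := by
      rw [neg_le, ← neg_div, ← neg_mul]
      apply div_le_div_of_nonneg_right ?_ (by positivity)
      have := (abs_le.mp (hRbd x)).1
      nlinarith
    have h2 : η * R x / ((1 + η) * β) ≤ η * M / ((1 + η) * β) := by
      apply div_le_div_of_nonneg_right ?_ (by positivity)
      have := (abs_le.mp (hRbd x)).2
      nlinarith
    constructor
    · exact mul_le_mul (Real.exp_le_exp.mpr h1)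
        (Real.rpow_le_rpow hε.le hx.1 hs_pos.le) (by positivity) (Real.exp_pos _).le
    · exact mul_le_mul (Real.exp_le_exp.mpr h2)
        (Real.rpow_le_rpow hqx.le hx.2 hs_pos.le) (by positivity) (Real.exp_pos _).le
  have hp_int : Integrable p π_ref := by
    refine integrable_of_ae_abs_le hp_meas.aestronglyMeasurable (K := M₀) ?_
    filter_upwards [hp_bdd] with x hx
    rw [abs_le]
    constructor
    · linarith [hx.1, hm₀_pos]
    · exact hx.2
  have hN_pos : 0 < N := by
    have h1 : m₀ ≤ N := by
      have : ∫ (_ : X), m₀ ∂π_ref ≤ ∫ x, p x ∂π_ref := by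
        refine integral_mono_ae (integrable_const m₀) hp_int ?_
        filter_upwards [hp_bdd] with x hx using hx.1
      simpa [hN] using this
    linarith
  -- Tν is a probability measure
  have hpN_int : Integrable (fun x => p x / N) π_ref := hp_int.div_const N
  have hpN_nn : 0 ≤ᵐ[π_ref] fun x => p x / N := by
    filter_upwards [hp_bdd] with x hx
    have hp0 : 0 < p x := lt_of_lt_of_le hm₀_pos hx.1
    positivity
  have hTν' : Tν = π_ref.withDensity (fun x => ENNReal.ofReal (p x / N)) := by
    rw [hTν]
  haveI hTprob : IsProbabilityMeasure Tν := by
    constructor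
    rw [hTν', withDensity_apply _ MeasurableSet.univ, Measure.restrict_univ,
      ← ofReal_integral_eq_lintegral_ofReal hpN_int hpN_nn]
    rw [integral_div, ← hN, div_self hN_pos.ne']
    simp
  -- absolute continuity facts
  have hT_ac : Tν ≪ π_ref := hTν ▸ withDensity_absolutelyContinuous _ _
  have hν_ac : ν ≪ π_ref := hν ▸ withDensity_absolutelyContinuous _ _
  have hq_ne : ∀ᵐ x ∂π_ref, ENNReal.ofReal (q x) ≠ 0 := by
    filter_upwards [hqbd] with x hx
    simp only [ne_eq, ENNReal.ofReal_eq_zero, not_le]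
    linarith [hx.1]
  have hπν : π_ref ≪ ν := by
    refine Measure.AbsolutelyContinuous.mk fun t ht h0 => ?_
    rw [hν, withDensity_apply_eq_zero hqmeas.ennreal_ofReal] at h0
    have hsub : t ⊆ ({x | ENNReal.ofReal (q x) ≠ 0} ∩ t) ∪ {x | ENNReal.ofReal (q x) = 0} := by
      intro x hx
      by_cases hqx : ENNReal.ofReal (q x) = 0
      · exact Or.inr hqx
      · exact Or.inl ⟨hqx, hx⟩
    refine measure_mono_null hsub (le_antisymm ?_ zero_le)
    calc π_ref (({x | ENNReal.ofReal (q x) ≠ 0} ∩ t) ∪ {x | ENNReal.ofReal (q x) = 0})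
        ≤ π_ref ({x | ENNReal.ofReal (q x) ≠ 0} ∩ t) + π_ref {x | ENNReal.ofReal (q x) = 0} :=
          measure_union_le _ _
      _ = 0 := by
          rw [h0, zero_add]
          have := ae_iff.mp hq_ne
          simpa using this
  have hTν_ac : Tν ≪ ν := hT_ac.trans hπν
  -- Tν as withDensity over ν
  set g : X → ℝ≥0∞ := fun x => ENNReal.ofReal (p x / (N * q x)) with hg
  have hg_meas : Measurable g := ((hp_meas.div ((measurable_const.mul hqmeas))).ennreal_ofReal)
  have hTg : Tν = ν.withDensity g := by
    rw [hν, ← withDensity_mul _ hqmeas.ennreal_ofReal hg_meas, hTν']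
    refine withDensity_congr_ae ?_
    filter_upwards [hqbd] with x hx
    have hqx : 0 < q x := lt_of_lt_of_le hε hx.1
    simp only [Pi.mul_apply, hg]
    rw [← ENNReal.ofReal_mul hqx.le]
    congr 1
    field_simp
  -- log of q bounds
  set Lq : ℝ := max |Real.log ε| |Real.log C| with hLq
  have hlogq : ∀ᵐ x ∂π_ref, |Real.log (q x)| ≤ Lq := by
    filter_upwards [hqbd] with x hx
    have hqx : 0 < q x := lt_of_lt_of_le hε hx.1
    have h1 : Real.log ε ≤ Real.log (q x) := Real.log_le_log hε hx.1
    have h2 : Real.log (q x) ≤ Real.log C := Real.log_le_log hqx hx.2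
    rw [abs_le]
    constructor
    · calc -Lq ≤ -|Real.log ε| := neg_le_neg (le_max_left _ _)
        _ ≤ Real.log ε := neg_abs_le _
        _ ≤ Real.log (q x) := h1
    · calc Real.log (q x) ≤ Real.log C := h2
        _ ≤ |Real.log C| := le_abs_self _
        _ ≤ Lq := le_max_right _ _
  -- llr identities
  have hrn1 : Tν.rnDeriv π_ref =ᵐ[π_ref] fun x => ENNReal.ofReal (p x / N) := by
    have := Measure.rnDeriv_withDensity π_ref (hp_meas.div_const N).ennreal_ofReal
    rw [← hTν'] at this
    exact this
  have hllr1 : llr Tν π_ref =ᵐ[π_ref]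
      fun x => a * R x + s * Real.log (q x) - Real.log N := by
    filter_upwards [hrn1, hqbd] with x hx hq
    have hqx : 0 < q x := lt_of_lt_of_le hε hq.1
    have hpx : 0 < p x := by positivity
    rw [llr, hx, ENNReal.toReal_ofReal (by positivity)]
    rw [Real.log_div hpx.ne' hN_pos.ne', hp]
    rw [Real.log_mul (Real.exp_ne_zero _) (Real.rpow_pos_of_pos hqx _).ne',
      Real.log_exp, Real.log_rpow hqx]
    rw [ha]
    ring
  have hrn2 : Tν.rnDeriv ν =ᵐ[ν] g := by
    have := Measure.rnDeriv_withDensity ν hg_meas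
    rw [← hTg] at this
    exact this
  have hqbd_ν : ∀ᵐ x ∂ν, ε ≤ q x ∧ q x ≤ C := hν_ac.ae_le hqbd
  have hllr2 : llr Tν ν =ᵐ[ν]
      fun x => a * R x - (η / (1 + η)) * Real.log (q x) - Real.log N := by
    filter_upwards [hrn2, hqbd_ν] with x hx hq
    have hqx : 0 < q x := lt_of_lt_of_le hε hq.1
    have hpx : 0 < p x := by positivity
    rw [llr, hx, hg, ENNReal.toReal_ofReal (by positivity)]
    rw [Real.log_div hpx.ne' (by positivity), hp]
    rw [Real.log_mul (Real.exp_ne_zero _) (Real.rpow_pos_of_pos hqx _).ne',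
      Real.log_exp, Real.log_rpow hqx,
      Real.log_mul hN_pos.ne' hqx.ne']
    rw [ha, hs]
    field_simp
    ring
  have hrn3 : ν.rnDeriv π_ref =ᵐ[π_ref] fun x => ENNReal.ofReal (q x) := by
    have := Measure.rnDeriv_withDensity π_ref hqmeas.ennreal_ofReal
    rw [← hν] at this
    exact this
  have hllr3 : llr ν π_ref =ᵐ[π_ref] fun x => Real.log (q x) := by
    filter_upwards [hrn3, hqbd] with x hx hq
    have hqx : 0 < q x := lt_of_lt_of_le hε hq.1
    rw [llr, hx, ENNReal.toReal_ofReal hqx.le]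
  -- transfer to the right measures
  have hllr1T : llr Tν π_ref =ᵐ[Tν]
      fun x => a * R x + s * Real.log (q x) - Real.log N := hT_ac.ae_le hllr1
  have hllr2T : llr Tν ν =ᵐ[Tν]
      fun x => a * R x - (η / (1 + η)) * Real.log (q x) - Real.log N := hTν_ac.ae_le hllr2
  have hllr3ν : llr ν π_ref =ᵐ[ν] fun x => Real.log (q x) := hν_ac.ae_le hllr3
  -- integrability of the pieces
  have hR_int_T : Integrable R Tν :=
    integrable_of_ae_abs_le hRmeas.aestronglyMeasurable (Filter.Eventually.of_forall hRbd)
  have hR_int_ν : Integrable R ν :=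
    integrable_of_ae_abs_le hRmeas.aestronglyMeasurable (Filter.Eventually.of_forall hRbd)
  have hlogq_T : ∀ᵐ x ∂Tν, |Real.log (q x)| ≤ Lq := hT_ac.ae_le hlogq
  have hlogq_ν : ∀ᵐ x ∂ν, |Real.log (q x)| ≤ Lq := hν_ac.ae_le hlogq
  have hlq_int_T : Integrable (fun x => Real.log (q x)) Tν :=
    integrable_of_ae_abs_le hqmeas.log.aestronglyMeasurable hlogq_T
  have hlq_int_ν : Integrable (fun x => Real.log (q x)) ν :=
    integrable_of_ae_abs_le hqmeas.log.aestronglyMeasurable hlogq_ν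
  have hllr1_int : Integrable (llr Tν π_ref) Tν := by
    refine (Integrable.congr ?_ hllr1T.symm)
    exact (((hR_int_T.const_mul a).add (hlq_int_T.const_mul s)).sub (integrable_const _))
  have hllr2_int : Integrable (llr Tν ν) Tν := by
    refine (Integrable.congr ?_ hllr2T.symm)
    exact (((hR_int_T.const_mul a).sub (hlq_int_T.const_mul (η / (1 + η)))).sub
      (integrable_const _))
  have hllr3_int : Integrable (llr ν π_ref) ν := Integrable.congr hlq_int_ν hllr3ν.symm
  -- klDiv evaluations
  have hkl1 : klDiv Tν π_ref = ((∫ x, llr Tν π_ref x ∂Tν : ℝ) : EReal) := by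
    rw [klDiv, if_pos ⟨hT_ac, hllr1_int⟩]
  have hkl2 : klDiv Tν ν = ((∫ x, llr Tν ν x ∂Tν : ℝ) : EReal) := by
    rw [klDiv, if_pos ⟨hTν_ac, hllr2_int⟩]
  have hkl3 : klDiv ν π_ref = ((∫ x, llr ν π_ref x ∂ν : ℝ) : EReal) := by
    rw [klDiv, if_pos ⟨hν_ac, hllr3_int⟩]
  set IRT : ℝ := ∫ x, R x ∂Tν with hIRT
  set IRν : ℝ := ∫ x, R x ∂ν with hIRν
  set IlqT : ℝ := ∫ x, Real.log (q x) ∂Tν with hIlqT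
  set I3 : ℝ := ∫ x, Real.log (q x) ∂ν with hI3
  set L : ℝ := Real.log N with hL
  -- expansions of the llr integrals
  have hsum_int : Integrable (fun x => a * R x + s * Real.log (q x)) Tν :=
    (hR_int_T.const_mul a).add (hlq_int_T.const_mul s)
  have hI1 : ∫ x, llr Tν π_ref x ∂Tν = a * IRT + s * IlqT - L := by
    rw [integral_congr_ae hllr1T]
    rw [integral_sub hsum_int (integrable_const _),
      integral_add (hR_int_T.const_mul a) (hlq_int_T.const_mul s),
      integral_const_mul, integral_const_mul, integral_const]
    simp [hIRT, hIlqT]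
  have hdiff_int : Integrable (fun x => a * R x - (η / (1 + η)) * Real.log (q x)) Tν :=
    (hR_int_T.const_mul a).sub (hlq_int_T.const_mul (η / (1 + η)))
  have hI2 : ∫ x, llr Tν ν x ∂Tν = a * IRT - (η / (1 + η)) * IlqT - L := by
    rw [integral_congr_ae hllr2T]
    rw [integral_sub hdiff_int (integrable_const _),
      integral_sub (hR_int_T.const_mul a) (hlq_int_T.const_mul (η / (1 + η))),
      integral_const_mul, integral_const_mul, integral_const]
    simp [hIRT, hIlqT]
  have hI3' : ∫ x, llr ν π_ref x ∂ν = I3 := integral_congr_ae hllr3ν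
  set I2 : ℝ := a * IRT - (η / (1 + η)) * IlqT - L with hI2def
  -- ∫ q dπ_ref = 1
  have hq_nn : 0 ≤ᵐ[π_ref] q := by
    filter_upwards [hqbd] with x hx
    simp only [Pi.zero_apply]
    linarith [hx.1]
  have hq_int : Integrable q π_ref := by
    refine integrable_of_ae_abs_le hqmeas.aestronglyMeasurable (K := C) ?_
    filter_upwards [hqbd] with x hx
    rw [abs_le]; exact ⟨by linarith [hx.1], hx.2⟩
  have hq_one : ∫ x, q x ∂π_ref = 1 := by
    have h1 : (1 : ℝ≥0∞) = ν Set.univ := (measure_univ).symm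
    rw [hν, withDensity_apply _ MeasurableSet.univ, Measure.restrict_univ,
      ← ofReal_integral_eq_lintegral_ofReal hq_int hq_nn] at h1
    have := ENNReal.ofReal_eq_one.mp h1.symm
    linarith
  -- I2 ≥ 0 (nonnegativity of KL(Tν‖ν))
  have hNqp_T : ∫ x, N * q x / p x ∂Tν = 1 := by
    rw [hTν', integral_withDensity_ofReal (hp_meas.div_const N) hpN_nn]
    rw [← hq_one]
    refine integral_congr_ae ?_
    filter_upwards [hp_bdd] with x hx
    have hp0 : 0 < p x := lt_of_lt_of_le hm₀_pos hx.1
    field_simp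
  have hNqp_int : Integrable (fun x => N * q x / p x) Tν := by
    refine integrable_of_ae_abs_le
      (((measurable_const.mul hqmeas).div hp_meas).aestronglyMeasurable)
      (K := N * C / m₀) ?_
    filter_upwards [hT_ac.ae_le hqbd, hT_ac.ae_le hp_bdd] with x hx hpx
    have hqx : 0 < q x := lt_of_lt_of_le hε hx.1
    have hp0 : 0 < p x := lt_of_lt_of_le hm₀_pos hpx.1
    rw [abs_of_nonneg (by positivity)]
    apply div_le_div₀ (by positivity) ?_ hm₀_pos hpx.1
    exact mul_le_mul_of_nonneg_left hx.2 hN_pos.le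
  have hI2_nonneg : 0 ≤ I2 := by
    have hptwise : ∀ᵐ x ∂Tν, 1 - N * q x / p x ≤ llr Tν ν x := by
      filter_upwards [hllr2T, hT_ac.ae_le hqbd, hT_ac.ae_le hp_bdd] with x hx hq hpx
      have hqx : 0 < q x := lt_of_lt_of_le hε hq.1
      have hp0 : 0 < p x := lt_of_lt_of_le hm₀_pos hpx.1
      have hlog := Real.log_le_sub_one_of_pos (show (0:ℝ) < N * q x / p x by positivity)
      have hloginv : Real.log (N * q x / p x) = - Real.log (p x / (N * q x)) := by
        rw [← Real.log_inv]
        congr 1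
        field_simp
      have hval : llr Tν ν x = Real.log (p x / (N * q x)) := by
        rw [hx]
        rw [Real.log_div hp0.ne' (by positivity), hp,
          Real.log_mul (Real.exp_ne_zero _) (Real.rpow_pos_of_pos hqx _).ne',
          Real.log_exp, Real.log_rpow hqx, Real.log_mul hN_pos.ne' hqx.ne', ha, hs]
        field_simp
        ring
      rw [hval]
      linarith [hloginv ▸ hlog]
    have hone_sub : Integrable (fun x => 1 - N * q x / p x) Tν :=
      (integrable_const (1:ℝ)).sub hNqp_int
    have h := integral_mono_ae hone_sub hllr2_int hptwise
    rw [integral_sub (integrable_const (1:ℝ)) hNqp_int, integral_const, hNqp_T, hI2] at h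
    simp only [measure_univ, ENNReal.toReal_one, probReal_univ, smul_eq_mul, one_mul] at h
    linarith
  -- Jensen-type inequality: a * IRν - (η/(1+η)) * I3 ≤ L
  have hq_nn_ν := hq_nn
  set f₀ : X → ℝ := fun x => a * R x - (η / (1 + η)) * Real.log (q x) with hf₀
  have hf₀_meas : Measurable f₀ := (hRmeas.const_mul a).sub (hqmeas.log.const_mul _)
  have hexpf₀_eq : ∀ᵐ x ∂π_ref, q x * Real.exp (f₀ x) = p x := by
    filter_upwards [hqbd] with x hx
    have hqx : 0 < q x := lt_of_lt_of_le hε hx.1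
    have h1 : Real.exp (-(η / (1 + η)) * Real.log (q x)) = q x ^ (-(η / (1 + η))) := by
      rw [Real.rpow_def_of_pos hqx, mul_comm]
    have h2 : q x * q x ^ (-(η / (1 + η))) = q x ^ s := by
      nth_rewrite 1 [← Real.rpow_one (q x)]
      rw [← Real.rpow_add hqx]
      congr 1
      rw [hs]
      field_simp
      ring
    have h3 : f₀ x = a * R x + (-(η / (1 + η))) * Real.log (q x) := by rw [hf₀]; ring
    have h4 : a * R x = η * R x / ((1 + η) * β) := by rw [ha]; ring
    calc q x * Real.exp (f₀ x)
        = Real.exp (a * R x) * (q x * q x ^ (-(η / (1 + η)))) := by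
          rw [h3, Real.exp_add, h1]; ring
      _ = Real.exp (η * R x / ((1 + η) * β)) * q x ^ s := by rw [h2, h4]
      _ = p x := rfl
  have hexpf₀_int : Integrable (fun x => Real.exp (f₀ x)) ν := by
    refine integrable_of_ae_abs_le ((hf₀_meas.exp).aestronglyMeasurable)
      (K := Real.exp (a * M + (η / (1 + η)) * Lq)) ?_
    filter_upwards [hqbd_ν, hν_ac.ae_le hlogq] with x hx hlx
    rw [abs_of_nonneg (Real.exp_pos _).le, Real.exp_le_exp, hf₀]
    have h1 : a * R x ≤ a * M := by
      have := (abs_le.mp (hRbd x)).2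
      nlinarith
    have h2 : -((η / (1 + η)) * Real.log (q x)) ≤ (η / (1 + η)) * Lq := by
      have h3 : -Lq ≤ Real.log (q x) := by
        have := (abs_le.mp hlx).1; linarith
      have h4 : 0 ≤ η / (1 + η) := by positivity
      nlinarith [(abs_le.mp hlx).1, (abs_le.mp hlx).2]
    linarith
  have hexpf₀_ν : ∫ x, Real.exp (f₀ x) ∂ν = N := by
    rw [hν, integral_withDensity_ofReal hqmeas hq_nn]
    rw [show N = ∫ x, p x ∂π_ref from by rw [hN, hp]]
    exact integral_congr_ae hexpf₀_eq
  have hf₀_int : Integrable f₀ ν := by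
    refine integrable_of_ae_abs_le (hf₀_meas.aestronglyMeasurable)
      (K := a * M + (η / (1 + η)) * Lq) ?_
    filter_upwards [hν_ac.ae_le hlogq] with x hlx
    rw [hf₀, abs_le]
    have h1 := abs_le.mp (hRbd x)
    have h2 := abs_le.mp hlx
    have h4 : 0 ≤ η / (1 + η) := by positivity
    constructor <;> nlinarith
  have hf₀_exp : ∫ x, f₀ x ∂ν = a * IRν - (η / (1 + η)) * I3 := by
    rw [hf₀, integral_sub (hR_int_ν.const_mul a) (hlq_int_ν.const_mul _),
      integral_const_mul, integral_const_mul]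
  have hJensen : a * IRν - (η / (1 + η)) * I3 ≤ L := by
    have hptwise : ∀ᵐ x ∂ν, f₀ x - L ≤ Real.exp (f₀ x) / N - 1 := by
      refine Filter.Eventually.of_forall fun x => ?_
      have h := Real.log_le_sub_one_of_pos (show (0:ℝ) < Real.exp (f₀ x) / N by positivity)
      rw [Real.log_div (Real.exp_ne_zero _) hN_pos.ne', Real.log_exp] at h
      rw [hL]
      linarith
    have hf₀sub : Integrable (fun x => f₀ x - L) ν := hf₀_int.sub (integrable_const L)
    have hexpsub : Integrable (fun x => Real.exp (f₀ x) / N - 1) ν :=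
      (hexpf₀_int.div_const N).sub (integrable_const 1)
    have h := integral_mono_ae hf₀sub hexpsub hptwise
    rw [integral_sub hf₀_int (integrable_const L),
      integral_sub (hexpf₀_int.div_const N) (integrable_const 1),
      integral_div, hexpf₀_ν, div_self hN_pos.ne', integral_const, integral_const] at h
    simp only [measure_univ, ENNReal.toReal_one, probReal_univ, smul_eq_mul, one_mul] at h
    rw [hf₀_exp] at h
    linarith
  -- assemble
  have hJT : J Tν = ((IRT - β * (a * IRT + s * IlqT - L) : ℝ) : EReal) := by
    rw [hJ Tν, hkl1, hI1, ← hIRT]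
    norm_cast
  have hJν : J ν = ((IRν - β * I3 : ℝ) : EReal) := by
    rw [hJ ν, hkl3, hI3', ← hIRν]
    norm_cast
  have hklTν : klDiv Tν ν = ((I2 : ℝ) : EReal) := by
    rw [hkl2, hI2, hI2def]
  -- the key real inequality
  have hkey : IRν - β * I3 + (β / η) * I2 ≤ IRT - β * (a * IRT + s * IlqT - L) := by
    have hexpand : IRT - β * (a * IRT + s * IlqT - L) - (β / η) * I2
        = (β * (1 + η) / η) * L := by
      rw [hI2def, ha, hs]
      field_simp
      ring
    have hB : IRν - β * I3 ≤ (β * (1 + η) / η) * L := by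
      have hmul := mul_le_mul_of_nonneg_left hJensen
        (show (0:ℝ) ≤ β * (1 + η) / η by positivity)
      have heq : (β * (1 + η) / η) * (a * IRν - (η / (1 + η)) * I3) = IRν - β * I3 := by
        rw [ha]
        field_simp
      linarith [heq ▸ hmul]
    linarith
  constructor
  · rw [hJT, hJν, hklTν, ge_iff_le, ← EReal.coe_mul, ← EReal.coe_add, EReal.coe_le_coe_iff]
    exact hkey
  · rw [hJT, hJν, ge_iff_le, EReal.coe_le_coe_iff]
    have : 0 ≤ (β / η) * I2 := mul_nonneg (by positivity) hI2_nonneg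
    linarith
end

section
/- For every θ₀ ∈ ℝ, the stop-gradient PEPG surrogate has the same θ-gradient as the proximal objective: (d/dθ) [ Σ_{x ∈ X} π_old(x)·(A(x) − log(p(θ₀, x)/π_old(x)))·(p(θ₀, x)/π_old(x))·log p(θ, x) ] evaluated at θ = θ₀ equals (d/dθ) [ Σ_{x ∈ X} A(x)·p(θ, x) − Σ_{x ∈ X} p(θ, x)·log(p(θ, x)/π_old(x)) ] evaluated at θ = θ₀. -/
/-- The stop-gradient PEPG surrogate has the same `θ`-gradient as the proximal objective:
at any `θ₀`,
`(d/dθ)[Σ_x π_old(x)·(A(x) − log(p(θ₀,x)/π_old(x)))·(p(θ₀,x)/π_old(x))·log p(θ,x)]|_{θ=θ₀}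
  = (d/dθ)[Σ_x A(x)·p(θ,x) − Σ_x p(θ,x)·log(p(θ,x)/π_old(x))]|_{θ=θ₀}`. -/
theorem pepg_surrogate_gradient
    {X : Type*} [Fintype X]
    (π_old : X → ℝ) (hold_pos : ∀ x, 0 < π_old x) (hold_sum : ∑ x, π_old x = 1)
    (A : X → ℝ)
    (p : ℝ → X → ℝ)
    (hpos : ∀ θ x, 0 < p θ x)
    (hsum : ∀ θ, ∑ x, p θ x = 1)
    (hdiff : ∀ x, Differentiable ℝ (fun θ => p θ x))
    (θ₀ : ℝ) :
    deriv (fun θ => ∑ x, π_old x * (A x - Real.log (p θ₀ x / π_old x))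
        * (p θ₀ x / π_old x) * Real.log (p θ x)) θ₀
      = deriv (fun θ => (∑ x, A x * p θ x)
          - ∑ x, p θ x * Real.log (p θ x / π_old x)) θ₀ := by
  set d : X → ℝ := fun x => deriv (fun θ => p θ x) θ₀ with hd_def
  have hpne : ∀ θ x, p θ x ≠ 0 := fun θ x => (hpos θ x).ne'
  have hπne : ∀ x, π_old x ≠ 0 := fun x => (hold_pos x).ne'
  have hd : ∀ x, HasDerivAt (fun θ => p θ x) (d x) θ₀ := fun x =>
    ((hdiff x) θ₀).hasDerivAt
  -- sum of derivatives is zero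
  have hsum_d : ∑ x, d x = 0 := by
    have h1 : HasDerivAt (fun θ => ∑ x, p θ x) (∑ x, d x) θ₀ :=
      HasDerivAt.fun_sum fun x _ => hd x
    have h2 : (fun θ => ∑ x, p θ x) = fun _ => (1 : ℝ) := funext fun θ => hsum θ
    rw [h2] at h1
    have := h1.deriv
    simpa using this.symm.trans (deriv_const θ₀ 1)
  -- LHS derivative
  have hL : HasDerivAt (fun θ => ∑ x, π_old x * (A x - Real.log (p θ₀ x / π_old x))
      * (p θ₀ x / π_old x) * Real.log (p θ x))
      (∑ x, π_old x * (A x - Real.log (p θ₀ x / π_old x))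
        * (p θ₀ x / π_old x) * (d x / p θ₀ x)) θ₀ := by
    refine HasDerivAt.fun_sum fun x _ => ?_
    have := ((hd x).log (hpne θ₀ x)).const_mul
      (π_old x * (A x - Real.log (p θ₀ x / π_old x)) * (p θ₀ x / π_old x))
    simpa [mul_comm, mul_assoc, mul_left_comm] using this
  -- RHS derivative
  have hR : HasDerivAt (fun θ => (∑ x, A x * p θ x)
      - ∑ x, p θ x * Real.log (p θ x / π_old x))
      ((∑ x, A x * d x)
        - ∑ x, (d x * (Real.log (p θ₀ x) - Real.log (π_old x))
            + p θ₀ x * (d x / p θ₀ x))) θ₀ := by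
    refine HasDerivAt.sub (HasDerivAt.fun_sum fun x _ => (hd x).const_mul (A x)) ?_
    have heq : (fun θ => ∑ x, p θ x * Real.log (p θ x / π_old x))
        = fun θ => ∑ x, p θ x * (Real.log (p θ x) - Real.log (π_old x)) := by
      funext θ
      exact Finset.sum_congr rfl fun x _ => by rw [Real.log_div (hpne θ x) (hπne x)]
    rw [heq]
    exact HasDerivAt.fun_sum fun x _ =>
      (hd x).mul (((hd x).log (hpne θ₀ x)).sub_const (Real.log (π_old x)))
  rw [hL.deriv, hR.deriv]
  have key : ∀ x, π_old x * (A x - Real.log (p θ₀ x / π_old x))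
      * (p θ₀ x / π_old x) * (d x / p θ₀ x)
      = A x * d x - (d x * (Real.log (p θ₀ x) - Real.log (π_old x))
          + p θ₀ x * (d x / p θ₀ x)) + d x := by
    intro x
    rw [Real.log_div (hpne θ₀ x) (hπne x)]
    field_simp [hπne x, hpne θ₀ x]
    ring
  calc ∑ x, π_old x * (A x - Real.log (p θ₀ x / π_old x))
        * (p θ₀ x / π_old x) * (d x / p θ₀ x)
      = ∑ x, (A x * d x - (d x * (Real.log (p θ₀ x) - Real.log (π_old x))
          + p θ₀ x * (d x / p θ₀ x)) + d x) := Finset.sum_congr rfl fun x _ => key x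
    _ = (∑ x, A x * d x) - (∑ x, (d x * (Real.log (p θ₀ x) - Real.log (π_old x))
          + p θ₀ x * (d x / p θ₀ x))) + ∑ x, d x := by
        rw [Finset.sum_add_distrib, Finset.sum_sub_distrib]
    _ = _ := by rw [hsum_d, add_zero]
end

section
/- For every θ₀ ∈ ℝ, the stop-gradient PAR regression surrogate has θ-gradient equal to the negative of that of the proximal objective: (d/dθ) [ Σ_{x ∈ X} π_old(x)·(1/2)·(p(θ₀, x)/π_old(x))·(A(x) − log(p(θ, x)/π_old(x)))² ] evaluated at θ = θ₀ equals −(d/dθ) [ Σ_{x ∈ X} A(x)·p(θ, x) − Σ_{x ∈ X} p(θ, x)·log(p(θ, x)/π_old(x)) ] evaluated at θ = θ₀. -/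
/-- The stop-gradient PAR regression surrogate has `θ`-gradient equal to the negative of
that of the proximal objective: at any `θ₀`,
`(d/dθ)[Σ_x π_old(x)·(1/2)·(p(θ₀,x)/π_old(x))·(A(x) − log(p(θ,x)/π_old(x)))²]|_{θ=θ₀}
  = −(d/dθ)[Σ_x A(x)·p(θ,x) − Σ_x p(θ,x)·log(p(θ,x)/π_old(x))]|_{θ=θ₀}`. -/
theorem par_surrogate_gradient
    {X : Type*} [Fintype X]
    (π_old : X → ℝ) (hold_pos : ∀ x, 0 < π_old x) (hold_sum : ∑ x, π_old x = 1)
    (A : X → ℝ)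
    (p : ℝ → X → ℝ)
    (hpos : ∀ θ x, 0 < p θ x)
    (hsum : ∀ θ, ∑ x, p θ x = 1)
    (hdiff : ∀ x, Differentiable ℝ (fun θ => p θ x))
    (θ₀ : ℝ) :
    deriv (fun θ => ∑ x, π_old x * (1 / 2) * (p θ₀ x / π_old x)
        * (A x - Real.log (p θ x / π_old x)) ^ 2) θ₀
      = - deriv (fun θ => (∑ x, A x * p θ x)
          - ∑ x, p θ x * Real.log (p θ x / π_old x)) θ₀ := by
  set g : X → ℝ := fun x => deriv (fun θ => p θ x) θ₀ with hgdef
  have hg : ∀ x, HasDerivAt (fun θ => p θ x) (g x) θ₀ :=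
    fun x => ((hdiff x) θ₀).hasDerivAt
  have hpne : ∀ x, p θ₀ x ≠ 0 := fun x => (hpos θ₀ x).ne'
  have hπne : ∀ x, π_old x ≠ 0 := fun x => (hold_pos x).ne'
  -- sum of derivatives is zero
  have hsumg : ∑ x, g x = 0 := by
    have h1 : HasDerivAt (fun θ => ∑ x, p θ x) (∑ x, g x) θ₀ :=
      HasDerivAt.fun_sum fun x _ => hg x
    have h2 : (fun θ => ∑ x, p θ x) = fun _ : ℝ => (1 : ℝ) := funext fun θ => hsum θ
    rw [h2] at h1
    have h3 : HasDerivAt (fun _ : ℝ => (1 : ℝ)) 0 θ₀ := hasDerivAt_const _ _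
    exact h1.unique h3
  -- derivative of log ratio
  have hlog : ∀ x, HasDerivAt (fun θ => Real.log (p θ x / π_old x)) (g x / p θ₀ x) θ₀ := by
    intro x
    have heq : (fun θ => Real.log (p θ x / π_old x))
        = fun θ => Real.log (p θ x) - Real.log (π_old x) :=
      funext fun θ => Real.log_div (hpos θ x).ne' (hπne x)
    rw [heq]
    simpa using ((hg x).log (hpne x)).sub_const (Real.log (π_old x))
  -- LHS derivative
  set L : X → ℝ := fun x => Real.log (p θ₀ x / π_old x) with hLdef
  have hLHS : HasDerivAt (fun θ => ∑ x, π_old x * (1 / 2) * (p θ₀ x / π_old x)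
      * (A x - Real.log (p θ x / π_old x)) ^ 2)
      (∑ x, π_old x * (1 / 2) * (p θ₀ x / π_old x)
        * (2 * (A x - L x) ^ 1 * (0 - g x / p θ₀ x))) θ₀ := by
    refine HasDerivAt.fun_sum fun x _ => ?_
    exact (((hasDerivAt_const θ₀ (A x)).sub (hlog x)).pow 2).const_mul _
  -- RHS derivative
  have hRHS : HasDerivAt (fun θ => (∑ x, A x * p θ x)
      - ∑ x, p θ x * Real.log (p θ x / π_old x))
      ((∑ x, A x * g x) - ∑ x, (g x * L x + p θ₀ x * (g x / p θ₀ x))) θ₀ := by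
    refine HasDerivAt.sub (HasDerivAt.fun_sum fun x _ => (hg x).const_mul (A x))
      (HasDerivAt.fun_sum fun x _ => (hg x).mul (hlog x))
  rw [hLHS.deriv, hRHS.deriv]
  have hterm : ∀ x, π_old x * (1 / 2) * (p θ₀ x / π_old x)
      * (2 * (A x - L x) ^ 1 * (0 - g x / p θ₀ x))
      = -(A x * g x - (g x * L x + p θ₀ x * (g x / p θ₀ x))) - g x := by
    intro x
    field_simp [hpne x, hπne x]
    ring
  rw [Finset.sum_congr rfl fun x _ => hterm x, Finset.sum_sub_distrib, hsumg,
    Finset.sum_neg_distrib, Finset.sum_sub_distrib]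
  ring
end
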